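/- Let O be a discrete valuation ring with maximal ideal 𝔭, and let Iₙ ⊆ GLₙ(O) be the Iwahori subgroup of matrices that are upper-triangular modulo 𝔭. For compositions α ≤ β of n, let I_α be the α-block-diagonal subgroup of Iₙ, U_α^β = U_α ∩ I_β the upper unitriangular matrices inside I_β with trivial α-blocks, and V_α^β = U_αᵗ ∩ I_β. Then the multiplication map U_α^β × I_α × V_α^β → I_β is a bijection. -/

import Mathlib

section Iwahori

variable {O : Type} [CommRing O] [IsDomain O] [IsDiscreteValuationRing O] {n : ℕ}

/-- Membership in the Iwahori subgroup `Iₙ ⊆ GLₙ(O)`: `g` is invertible and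
upper-triangular modulo the maximal ideal `𝔭`. -/
def InIwahori (g : Matrix (Fin n) (Fin n) O) : Prop :=
  IsUnit g ∧ ∀ i j : Fin n, j < i → g i j ∈ IsLocalRing.maximalIdeal O

/-- Membership in the `γ`-block-diagonal subgroup `I_γ` of the Iwahori subgroup:
`g ∈ Iₙ` and `g i j = 0` unless `i` and `j` lie in the same block of `γ`. -/
def InBlockLevi (γ : Composition n) (g : Matrix (Fin n) (Fin n) O) : Prop :=
  InIwahori g ∧ ∀ i j : Fin n, γ.index i ≠ γ.index j → g i j = 0

/-- Membership in `U_γ`: `g` is upper-triangular with unipotent diagonal and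
`g i j = 0` for `i ≠ j` in the same block of `γ`. -/
def InUpper (γ : Composition n) (g : Matrix (Fin n) (Fin n) O) : Prop :=
  (∀ i j : Fin n, j < i → g i j = 0) ∧ (∀ i : Fin n, g i i = 1) ∧
  (∀ i j : Fin n, i ≠ j → γ.index i = γ.index j → g i j = 0)

/-- Membership in `V_γ = U_γᵗ ∩ Iₙ`: `g` is lower-triangular with unipotent
diagonal, strictly-lower entries in the maximal ideal, and `g i j = 0` for
`i ≠ j` in the same block of `γ`. -/
def InLower (γ : Composition n) (g : Matrix (Fin n) (Fin n) O) : Prop :=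
  (∀ i j : Fin n, i < j → g i j = 0) ∧ (∀ i : Fin n, g i i = 1) ∧
  (∀ i j : Fin n, i ≠ j → γ.index i = γ.index j → g i j = 0) ∧
  (∀ i j : Fin n, j < i → g i j ∈ IsLocalRing.maximalIdeal O)

/-- Membership in `U_α^β = U_α ∩ I_β`. -/
def InUpperSub (α β : Composition n) (g : Matrix (Fin n) (Fin n) O) : Prop :=
  InUpper α g ∧ ∀ i j : Fin n, β.index i ≠ β.index j → g i j = 0

/-- Membership in `V_α^β = V_α ∩ I_β`. -/
def InLowerSub (α β : Composition n) (g : Matrix (Fin n) (Fin n) O) : Prop :=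
  InLower α g ∧ ∀ i j : Fin n, β.index i ≠ β.index j → g i j = 0

end Iwahori

namespace IwahoriPf
set_option linter.unusedSectionVars false

open Matrix

variable {O : Type} [CommRing O] [IsDomain O] [IsDiscreteValuationRing O] {n : ℕ}

local notation "𝔭" => IsLocalRing.maximalIdeal O
local notation "φ" => IsLocalRing.residue O

lemma mem_p_iff {x : O} : x ∈ 𝔭 ↔ φ x = 0 := (Ideal.Quotient.eq_zero_iff_mem).symm

lemma unit_iff_res {x : O} : IsUnit x ↔ φ x ≠ 0 := by
  rw [← IsLocalRing.notMem_maximalIdeal]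
  exact not_congr mem_p_iff

/-- support predicate -/
def FS {κ : Type} (F : Fin n → κ) (M : Matrix (Fin n) (Fin n) O) : Prop :=
  ∀ i j, F i ≠ F j → M i j = 0

variable {κ : Type} {F : Fin n → κ}

lemma FS.one : FS F (1 : Matrix (Fin n) (Fin n) O) :=
  fun i j h => Matrix.one_apply_ne (fun e => h (by rw [e]))

lemma FS.diagonal (d : Fin n → O) : FS F (Matrix.diagonal d) :=
  fun _ _ h => Matrix.diagonal_apply_ne _ (fun e => h (by rw [e]))

lemma FS.mul {M N : Matrix (Fin n) (Fin n) O} (hM : FS F M) (hN : FS F N) :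
    FS F (M * N) := by
  intro i j hij
  rw [Matrix.mul_apply]
  apply Finset.sum_eq_zero
  intro k _
  by_cases h : F i = F k
  · rw [hN k j (fun e => hij (h.trans e)), mul_zero]
  · rw [hM i k h, zero_mul]

lemma FS.sub {M N : Matrix (Fin n) (Fin n) O} (hM : FS F M) (hN : FS F N) :
    FS F (M - N) := by
  intro i j hij
  rw [Matrix.sub_apply, hM i j hij, hN i j hij, sub_zero]

lemma FS.add {M N : Matrix (Fin n) (Fin n) O} (hM : FS F M) (hN : FS F N) :
    FS F (M + N) := by
  intro i j hij
  rw [Matrix.add_apply, hM i j hij, hN i j hij, add_zero]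

lemma FS.pow {M : Matrix (Fin n) (Fin n) O} (hM : FS F M) (k : ℕ) : FS F (M ^ k) := by
  induction k with
  | zero => simpa using (FS.one : FS F _)
  | succ k ih => rw [pow_succ]; exact ih.mul hM

/-- monotonicity of Composition.index -/
lemma index_mono (γ : Composition n) {i j : Fin n} (h : i ≤ j) :
    (γ.index i : ℕ) ≤ (γ.index j : ℕ) := by
  by_contra hc
  push_neg at hc
  have h1 : γ.sizeUpTo ((γ.index j : ℕ) + 1) ≤ γ.sizeUpTo (γ.index i : ℕ) :=
    γ.monotone_sizeUpTo (by omega)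
  have h2 := γ.lt_sizeUpTo_index_succ j
  have h3 := γ.sizeUpTo_index_le i
  have h4 : ((γ.index j).succ : ℕ) = (γ.index j : ℕ) + 1 := Fin.val_succ _
  rw [h4] at h2
  have h5 : (i : ℕ) ≤ (j : ℕ) := h
  omega

lemma det_res_of_tri {M : Matrix (Fin n) (Fin n) O}
    (hM : ∀ i j : Fin n, j < i → M i j ∈ 𝔭) :
    φ M.det = ∏ i, φ (M i i) := by
  rw [RingHom.map_det, RingHom.mapMatrix_apply]
  rw [Matrix.det_of_upperTriangular (show (M.map φ).BlockTriangular id from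
    fun i j hij => by
      rw [Matrix.map_apply, mem_p_iff.mp (hM i j hij)])]
  simp [Matrix.map_apply]

lemma diag_isUnit {g : Matrix (Fin n) (Fin n) O} (h : InIwahori g) :
    ∀ i, IsUnit (g i i) := by
  have hdet : IsUnit g.det := (Matrix.isUnit_iff_isUnit_det g).mp h.1
  have h1 : φ g.det ≠ 0 := (hdet.map φ).ne_zero
  rw [det_res_of_tri h.2] at h1
  intro i
  rw [unit_iff_res]
  intro h0
  exact h1 (Finset.prod_eq_zero (Finset.mem_univ i) h0)

lemma isUnit_of_diag {M : Matrix (Fin n) (Fin n) O} (hd : ∀ i, IsUnit (M i i))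
    (hM : ∀ i j : Fin n, j < i → M i j ∈ 𝔭) : IsUnit M := by
  rw [Matrix.isUnit_iff_isUnit_det, unit_iff_res, det_res_of_tri hM,
    Finset.prod_ne_zero_iff]
  exact fun i _ => unit_iff_res.mp (hd i)

lemma isUnit_inv_mul {M : Matrix (Fin n) (Fin n) O} (h : IsUnit M) :
    M * M⁻¹ = 1 ∧ M⁻¹ * M = 1 := by
  have hdet := (Matrix.isUnit_iff_isUnit_det M).mp h
  exact ⟨Matrix.mul_nonsing_inv M hdet, Matrix.nonsing_inv_mul M hdet⟩

lemma FS.inv {M : Matrix (Fin n) (Fin n) O} (h : IsUnit M) (hM : FS F M) :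
    FS F M⁻¹ := by
  classical
  have hmul := (isUnit_inv_mul h).1
  set N : Matrix (Fin n) (Fin n) O :=
    Matrix.of (fun i j => if F i = F j then M⁻¹ i j else 0) with hNdef
  have hMN : M * N = 1 := by
    ext i j
    rw [Matrix.mul_apply]
    by_cases hij : F i = F j
    · have he : ∀ k ∈ Finset.univ, M i k * N k j = M i k * M⁻¹ k j := by
        intro k _
        by_cases hk : F k = F j
        · simp [hNdef, hk]
        · rw [hM i k (fun hik => hk (hik ▸ hij)), zero_mul, zero_mul]
      rw [Finset.sum_congr rfl he, ← Matrix.mul_apply, hmul]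
    · have he : ∀ k ∈ Finset.univ, M i k * N k j = 0 := by
        intro k _
        by_cases hk : F k = F j
        · rw [hM i k (fun hik => hij (hik.trans hk)), zero_mul]
        · simp [hNdef, hk]
      rw [Finset.sum_eq_zero he, Matrix.one_apply_ne (fun e => hij (by rw [e]))]
  have hNe : M⁻¹ = N := Matrix.inv_eq_right_inv hMN
  intro i j hij
  rw [hNe]
  simp [hNdef, hij]

lemma inv_lower_mem {M : Matrix (Fin n) (Fin n) O} (h : IsUnit M)
    (hM : ∀ i j : Fin n, j < i → M i j ∈ 𝔭) :
    ∀ i j : Fin n, j < i → M⁻¹ i j ∈ 𝔭 := by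
  have hdet := (Matrix.isUnit_iff_isUnit_det M).mp h
  have hdet' : IsUnit ((M.map φ).det) := by
    rw [← RingHom.mapMatrix_apply, ← RingHom.map_det]; exact hdet.map φ
  have h1 : M.map φ * M⁻¹.map φ = 1 := by
    rw [← Matrix.map_mul, Matrix.mul_nonsing_inv M hdet,
      Matrix.map_one _ (map_zero φ) (map_one φ)]
  have hBT : (M.map φ).BlockTriangular id := fun i j hij => by
    rw [Matrix.map_apply, mem_p_iff.mp (hM i j hij)]
  haveI := (M.map φ).invertibleOfIsUnitDet hdet'
  have h2 := Matrix.blockTriangular_inv_of_blockTriangular hBT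
  have h3 : (M.map φ)⁻¹ = M⁻¹.map φ := Matrix.inv_eq_right_inv h1
  intro i j hij
  have h4 := h2 (show (id j : Fin n) < id i from hij)
  rw [h3] at h4
  rw [mem_p_iff]
  simpa [Matrix.map_apply] using h4


section Gen

variable {s : Fin n → Fin n → Prop} {J : Ideal O}

/-- generalized unipotent matrices: identity diagonal, off-diagonal entries in `J`
    and supported on `s`. -/
def GenU (s : Fin n → Fin n → Prop) (J : Ideal O) (M : Matrix (Fin n) (Fin n) O) : Prop :=
  (∀ i, M i i = 1) ∧ ∀ i j, i ≠ j → M i j ∈ J ∧ (¬ s i j → M i j = 0)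

lemma GenU.one : GenU s J (1 : Matrix (Fin n) (Fin n) O) :=
  ⟨fun i => Matrix.one_apply_eq i,
   fun _ _ hij => by simp [Matrix.one_apply_ne hij]⟩

lemma GenU.mul (hirr : ∀ i : Fin n, ¬ s i i)
    (htr : ∀ i j k : Fin n, s i j → s j k → s i k)
    {M N : Matrix (Fin n) (Fin n) O} (hM : GenU s J M) (hN : GenU s J N) :
    GenU s J (M * N) := by
  constructor
  · intro i
    rw [Matrix.mul_apply, Finset.sum_eq_single i]
    · rw [hM.1, hN.1, one_mul]
    · intro k _ hk
      by_cases h1 : s i k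
      · by_cases h2 : s k i
        · exact absurd (htr _ _ _ h1 h2) (hirr i)
        · rw [(hN.2 k i hk).2 h2, mul_zero]
      · rw [(hM.2 i k (Ne.symm hk)).2 h1, zero_mul]
    · intro h; exact absurd (Finset.mem_univ i) h
  · intro i j hij
    constructor
    · rw [Matrix.mul_apply]
      apply Ideal.sum_mem
      intro k _
      by_cases hki : k = i
      · subst hki
        rw [hM.1, one_mul]
        exact (hN.2 _ j hij).1
      · exact Ideal.mul_mem_right _ _ (hM.2 i k (fun e => hki e.symm)).1
    · intro hs
      rw [Matrix.mul_apply]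
      apply Finset.sum_eq_zero
      intro k _
      by_cases hki : k = i
      · subst hki
        rw [hM.1, one_mul]
        exact (hN.2 _ j hij).2 hs
      · by_cases hkj : k = j
        · subst hkj
          rw [(hM.2 i k hij).2 hs, zero_mul]
        · by_cases h1 : s i k
          · by_cases h2 : s k j
            · exact absurd (htr _ _ _ h1 h2) hs
            · rw [(hN.2 k j hkj).2 h2, mul_zero]
          · rw [(hM.2 i k (fun e => hki e.symm)).2 h1, zero_mul]

lemma GenU.inv (htr : ∀ i j k : Fin n, s i j → s j k → s i k)
    {κ : Type} {F : Fin n → κ} (m : Fin n → ℕ) (L : ℕ)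
    (hmL : ∀ i, m i ≤ L) (hsm : ∀ i j, s i j → m i < m j)
    {M : Matrix (Fin n) (Fin n) O} (hM : GenU s J M) (hFS : FS F M) :
    ∃ N, GenU s J N ∧ FS F N ∧ M * N = 1 ∧ N * M = 1 := by
  classical
  set P : Matrix (Fin n) (Fin n) O := 1 - M with hP
  have hPd : ∀ i, P i i = 0 := fun i => by
    simp [hP, Matrix.sub_apply, hM.1 i]
  have hPJ : ∀ i j, i ≠ j → P i j ∈ J := by
    intro i j h
    have : P i j = -(M i j) := by
      simp [hP, Matrix.sub_apply, Matrix.one_apply_ne h]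
    rw [this]
    exact neg_mem (hM.2 i j h).1
  have hPs : ∀ i j, ¬ s i j → P i j = 0 := by
    intro i j hs
    by_cases h : i = j
    · subst h; exact hPd i
    · have : P i j = -(M i j) := by
        simp [hP, Matrix.sub_apply, Matrix.one_apply_ne h]
      rw [this, (hM.2 i j h).2 hs, neg_zero]
  -- powers of P : support bound by measure
  have hPm : ∀ k : ℕ, 1 ≤ k → ∀ i j, ¬ (m i + k ≤ m j) → (P ^ k) i j = 0 := by
    intro k
    induction k with
    | zero => omega
    | succ k ih =>
      intro _ i j hmj
      rw [pow_succ, Matrix.mul_apply]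
      apply Finset.sum_eq_zero
      intro l _
      by_cases hk0 : k = 0
      · subst hk0
        simp only [pow_zero]
        by_cases hil : i = l
        · subst hil
          have hns : ¬ s i j := fun hs => hmj (by have := hsm _ _ hs; omega)
          rw [hPs _ _ hns, mul_zero]
        · rw [Matrix.one_apply_ne hil, zero_mul]
      · by_cases hP1 : (P ^ k) i l = 0
        · rw [hP1, zero_mul]
        · have h1 : m i + k ≤ m l := by
            by_contra hcon
            exact hP1 (ih (by omega) i l hcon)
          by_cases hPl : s l j
          · have := hsm _ _ hPl
            exact absurd (by omega : m i + (k+1) ≤ m j) hmj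
          · rw [hPs _ _ hPl, mul_zero]
  have hPL : P ^ (L + 1) = 0 := by
    ext i j
    rw [hPm (L+1) (by omega) i j (by have := hmL j; omega), Matrix.zero_apply]
  have hPL2 : P ^ (L + 2) = 0 := by
    rw [pow_succ, hPL, zero_mul]
  -- powers supported on s
  have hPsk : ∀ k : ℕ, ∀ i j, i ≠ j → ¬ s i j → (P ^ k) i j = 0 := by
    intro k
    induction k with
    | zero => intro i j hij _; rw [pow_zero, Matrix.one_apply_ne hij]
    | succ k ih =>
      intro i j hij hs
      rw [pow_succ, Matrix.mul_apply]
      apply Finset.sum_eq_zero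
      intro l _
      by_cases hli : l = i
      · subst hli; rw [hPs _ _ hs, mul_zero]
      · by_cases hlj : l = j
        · subst hlj; rw [hPd, mul_zero]
        · by_cases h1 : s l j
          · have h2 : ¬ s i l := fun h2 => hs (htr _ _ _ h2 h1)
            rw [ih i l (fun e => hli e.symm) h2, zero_mul]
          · rw [hPs _ _ h1, mul_zero]
  set N : Matrix (Fin n) (Fin n) O := ∑ k ∈ Finset.range (L + 2), P ^ k with hN
  have hNM : N * M = 1 := by
    have h1 := geom_sum_mul P (L + 2)
    rw [hPL2, show P - 1 = -M from by rw [hP]; abel] at h1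
    calc N * M = -(N * -M) := by rw [mul_neg, neg_neg]
      _ = -(0 - 1) := by rw [hN, h1]
      _ = 1 := by rw [zero_sub, neg_neg]
  have hMN : M * N = 1 := by
    have h1 := mul_geom_sum P (L + 2)
    rw [hPL2, show P - 1 = -M from by rw [hP]; abel] at h1
    calc M * N = -(-M * N) := by rw [neg_mul, neg_neg]
      _ = -(0 - 1) := by rw [hN, h1]
      _ = 1 := by rw [zero_sub, neg_neg]
  refine ⟨N, ⟨?_, ?_⟩, ?_, hMN, hNM⟩
  · -- diagonal
    intro i
    rw [hN, Matrix.sum_apply]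
    rw [Finset.sum_eq_single 0]
    · rw [pow_zero, Matrix.one_apply_eq]
    · intro k _ hk
      exact hPm k (by omega) i i (by omega)
    · intro h
      exact absurd (Finset.mem_range.mpr (by omega)) h
  · -- off diagonal
    intro i j hij
    constructor
    · rw [hN, Matrix.sum_apply]
      apply Ideal.sum_mem
      intro k _
      by_cases hk : k = 0
      · subst hk; rw [pow_zero, Matrix.one_apply_ne hij]; exact zero_mem J
      · obtain ⟨k', rfl⟩ : ∃ k', k = k' + 1 := ⟨k - 1, by omega⟩
        rw [pow_succ, Matrix.mul_apply]
        apply Ideal.sum_mem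
        intro l _
        by_cases hlj : l = j
        · subst hlj; rw [hPd, mul_zero]; exact zero_mem J
        · exact Ideal.mul_mem_left _ _ (hPJ l j hlj)
    · intro hs
      rw [hN, Matrix.sum_apply]
      apply Finset.sum_eq_zero
      intro k _
      exact hPsk k i j hij hs
  · -- FS
    have hFP : FS F P := by
      rw [hP]; exact FS.sub FS.one hFS
    intro i j hij
    rw [hN, Matrix.sum_apply]
    apply Finset.sum_eq_zero
    intro k _
    exact hFP.pow k i j hij

end Gen


section Comp

variable (α β : Composition n)

def fA (i : Fin n) : ℕ := (α.index i : ℕ)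

abbrev sU : Fin n → Fin n → Prop := fun i j => fA α i < fA α j
abbrev sL : Fin n → Fin n → Prop := fun i j => fA α j < fA α i

lemma hirrU : ∀ i : Fin n, ¬ sU α i i := fun _ => by simp
lemma htrU : ∀ i j k : Fin n, sU α i j → sU α j k → sU α i k := fun _ _ _ h1 h2 => h1.trans h2
lemma hirrL : ∀ i : Fin n, ¬ sL α i i := fun _ => by simp
lemma htrL : ∀ i j k : Fin n, sL α i j → sL α j k → sL α i k := fun _ _ _ h1 h2 => h2.trans h1

lemma fA_mono {i j : Fin n} (h : i ≤ j) : fA α i ≤ fA α j := index_mono α h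

lemma lt_of_fA_lt {i j : Fin n} (h : fA α i < fA α j) : i < j := by
  by_contra hc
  push_neg at hc
  exact absurd (fA_mono α hc) (by omega)

lemma fA_eq_iff {i j : Fin n} : fA α i = fA α j ↔ α.index i = α.index j := by
  unfold fA
  exact Fin.val_eq_val _ _

lemma fA_lt_len (i : Fin n) : fA α i < α.length := (α.index i).isLt

/-- measure for the lower side -/
lemma hmLU : ∀ i : Fin n, fA α i ≤ α.length := fun i => (fA_lt_len α i).le

lemma hsmL : ∀ i j : Fin n, sL α i j → (α.length - fA α i) < (α.length - fA α j) := by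
  intro i j h
  have h1 := fA_lt_len α i
  have h2 := fA_lt_len α j
  simp only [sL] at h
  omega

lemma hmLL : ∀ i : Fin n, α.length - fA α i ≤ α.length := fun _ => by omega

lemma inUpperSub_iff {u : Matrix (Fin n) (Fin n) O} :
    InUpperSub α β u ↔ GenU (sU α) (⊤ : Ideal O) u ∧ FS (fA β) u := by
  constructor
  · rintro ⟨⟨h1, h2, h3⟩, h4⟩
    refine ⟨⟨h2, fun i j hij => ⟨trivial, fun hs => ?_⟩⟩,
      fun i j hij => h4 i j (fun e => hij ((fA_eq_iff β).mpr e))⟩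
    rcases lt_trichotomy i j with h | h | h
    · have := fA_mono α h.le
      exact h3 i j hij ((fA_eq_iff α).mp (by omega))
    · exact absurd h hij
    · exact h1 i j h
  · rintro ⟨⟨h1, h2⟩, h3⟩
    refine ⟨⟨?_, h1, ?_⟩, ?_⟩
    · intro i j hij
      have := fA_mono α hij.le
      exact (h2 i j (ne_of_gt hij)).2 (by omega)
    · intro i j hij he
      refine (h2 i j hij).2 ?_
      have he' : fA α i = fA α j := (fA_eq_iff α).mpr he
      show ¬(fA α i < fA α j)
      omega
    · intro i j hij
      exact h3 i j (fun e => hij ((fA_eq_iff β).mp e))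

lemma inLowerSub_iff {v : Matrix (Fin n) (Fin n) O} :
    InLowerSub α β v ↔ GenU (sL α) (IsLocalRing.maximalIdeal O) v ∧ FS (fA β) v := by
  constructor
  · rintro ⟨⟨h1, h2, h3, h4⟩, h5⟩
    refine ⟨⟨h2, fun i j hij => ⟨?_, fun hs => ?_⟩⟩,
      fun i j hij => h5 i j (fun e => hij ((fA_eq_iff β).mpr e))⟩
    · rcases lt_trichotomy i j with h | h | h
      · rw [h1 i j h]; exact zero_mem _
      · exact absurd h hij
      · exact h4 i j h
    · rcases lt_trichotomy i j with h | h | h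
      · exact h1 i j h
      · exact absurd h hij
      · have := fA_mono α h.le
        exact h3 i j hij ((fA_eq_iff α).mp (by omega))
  · rintro ⟨⟨h1, h2⟩, h3⟩
    refine ⟨⟨?_, h1, ?_, ?_⟩, ?_⟩
    · intro i j hij
      have := fA_mono α hij.le
      exact (h2 i j (ne_of_lt hij)).2 (by omega)
    · intro i j hij he
      refine (h2 i j hij).2 ?_
      have he' : fA α i = fA α j := (fA_eq_iff α).mpr he
      show ¬(fA α j < fA α i)
      omega
    · intro i j hij
      exact (h2 i j (ne_of_gt hij)).1
    · intro i j hij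
      exact h3 i j (fun e => hij ((fA_eq_iff β).mp e))

lemma levi_FS {l : Matrix (Fin n) (Fin n) O} (hl : InBlockLevi α l) : FS (fA α) l :=
  fun i j h => hl.2 i j (fun e => h ((fA_eq_iff α).mpr e))

lemma inUpperSub_unit {u : Matrix (Fin n) (Fin n) O} (hu : InUpperSub α β u) :
    ∃ w, InUpperSub α β w ∧ u * w = 1 ∧ w * u = 1 := by
  obtain ⟨hG, hF⟩ := (inUpperSub_iff α β).mp hu
  obtain ⟨w, hwG, hwF, h1, h2⟩ :=
    GenU.inv (htrU α) (fA α) α.length (hmLU α) (fun i j h => h) hG hF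
  exact ⟨w, (inUpperSub_iff α β).mpr ⟨hwG, hwF⟩, h1, h2⟩

lemma inLowerSub_unit {v : Matrix (Fin n) (Fin n) O} (hv : InLowerSub α β v) :
    ∃ w, InLowerSub α β w ∧ v * w = 1 ∧ w * v = 1 := by
  obtain ⟨hG, hF⟩ := (inLowerSub_iff α β).mp hv
  obtain ⟨w, hwG, hwF, h1, h2⟩ :=
    GenU.inv (htrL α) (fun i => α.length - fA α i) α.length (hmLL α) (hsmL α) hG hF
  exact ⟨w, (inLowerSub_iff α β).mpr ⟨hwG, hwF⟩, h1, h2⟩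

lemma inUpperSub_mul {u u' : Matrix (Fin n) (Fin n) O}
    (h : InUpperSub α β u) (h' : InUpperSub α β u') : InUpperSub α β (u * u') := by
  obtain ⟨hG, hF⟩ := (inUpperSub_iff α β).mp h
  obtain ⟨hG', hF'⟩ := (inUpperSub_iff α β).mp h'
  exact (inUpperSub_iff α β).mpr ⟨GenU.mul (hirrU α) (htrU α) hG hG', hF.mul hF'⟩

lemma inLowerSub_mul {v v' : Matrix (Fin n) (Fin n) O}
    (h : InLowerSub α β v) (h' : InLowerSub α β v') : InLowerSub α β (v * v') := by
  obtain ⟨hG, hF⟩ := (inLowerSub_iff α β).mp h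
  obtain ⟨hG', hF'⟩ := (inLowerSub_iff α β).mp h'
  exact (inLowerSub_iff α β).mpr ⟨GenU.mul (hirrL α) (htrL α) hG hG', hF.mul hF'⟩

end Comp


section Main

variable {α β : Composition n}

lemma prod_levi (hαβ : ∀ i j : Fin n, α.index i = α.index j → β.index i = β.index j)
    {u l v : Matrix (Fin n) (Fin n) O}
    (hu : InUpperSub α β u) (hl : InBlockLevi α l) (hv : InLowerSub α β v) :
    InBlockLevi β (u * l * v) := by
  obtain ⟨u', _, huu', hu'u⟩ := inUpperSub_unit α β hu
  obtain ⟨v', _, hvv', hv'v⟩ := inLowerSub_unit α β hv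
  have hUu : IsUnit u := ⟨⟨u, u', huu', hu'u⟩, rfl⟩
  have hUv : IsUnit v := ⟨⟨v, v', hvv', hv'v⟩, rfl⟩
  refine ⟨⟨(hUu.mul hl.1.1).mul hUv, ?_⟩, ?_⟩
  · -- lower entries in the maximal ideal
    have hv1 : v.map φ = 1 := by
      ext i j
      rcases lt_trichotomy i j with h | h | h
      · rw [Matrix.map_apply, hv.1.1 i j h, map_zero, Matrix.one_apply_ne (ne_of_lt h)]
      · subst h
        rw [Matrix.map_apply, hv.1.2.1, _root_.map_one, Matrix.one_apply_eq]
      · rw [Matrix.map_apply, mem_p_iff.mp (hv.1.2.2.2 i j h),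
          Matrix.one_apply_ne (ne_of_gt h)]
    have hBTu : (u.map φ).BlockTriangular id := fun i j hij => by
      rw [Matrix.map_apply, hu.1.1 i j hij, map_zero]
    have hBTl : (l.map φ).BlockTriangular id := fun i j hij => by
      rw [Matrix.map_apply, mem_p_iff.mp (hl.1.2 i j hij)]
    have hmap : (u * l * v).map φ = u.map φ * l.map φ := by
      rw [Matrix.map_mul, Matrix.map_mul, hv1, mul_one]
    have hBT : ((u * l * v).map φ).BlockTriangular id := by
      rw [hmap]; exact hBTu.mul hBTl
    intro i j hij
    rw [mem_p_iff]
    have := hBT (show (id j : Fin n) < id i from hij)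
    rwa [Matrix.map_apply] at this
  · -- β-block support
    have hFu : FS (fA β) u := ((inUpperSub_iff α β).mp hu).2
    have hFv : FS (fA β) v := ((inLowerSub_iff α β).mp hv).2
    have hFl : FS (fA β) l := by
      intro i j hij
      refine hl.2 i j (fun e => hij ((fA_eq_iff β).mpr (hαβ i j e)))
    intro i j hij
    exact ((hFu.mul hFl).mul hFv) i j (fun e => hij ((fA_eq_iff β).mp e))

lemma decomp_unique
    {g u l v u' l' v' : Matrix (Fin n) (Fin n) O}
    (hu : InUpperSub α β u) (hl : InBlockLevi α l) (hv : InLowerSub α β v)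
    (hu' : InUpperSub α β u') (hl' : InBlockLevi α l') (hv' : InLowerSub α β v')
    (he : u * l * v = g) (he' : u' * l' * v' = g) :
    u = u' ∧ l = l' ∧ v = v' := by
  have h : u * l * v = u' * l' * v' := he.trans he'.symm
  obtain ⟨u'', hu''G, hu''F, h1, h2⟩ :=
    GenU.inv (htrU α) (fA α) α.length (hmLU α) (fun i j hh => hh)
      ((inUpperSub_iff α β).mp hu').1 ((inUpperSub_iff α β).mp hu').2
  obtain ⟨v'', hv''G, hv''F, h3, h4⟩ :=
    GenU.inv (htrL α) (fun i => α.length - fA α i) α.length (hmLL α) (hsmL α)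
      ((inLowerSub_iff α β).mp hv).1 ((inLowerSub_iff α β).mp hv).2
  have huG := ((inUpperSub_iff α β).mp hu).1
  have hv'G := ((inLowerSub_iff α β).mp hv').1
  set X : Matrix (Fin n) (Fin n) O := u'' * u with hXdef
  set Y : Matrix (Fin n) (Fin n) O := v' * v'' with hYdef
  have hXG : GenU (sU α) (⊤ : Ideal O) X := GenU.mul (hirrU α) (htrU α) hu''G huG
  have hYG : GenU (sL α) (IsLocalRing.maximalIdeal O) Y :=
    GenU.mul (hirrL α) (htrL α) hv'G hv''G
  have hkey : X * l = l' * Y := by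
    have e1 : X * l = u'' * (u * l * v) * v'' := by
      rw [show u'' * (u * l * v) * v'' = (u'' * u) * l * (v * v'') from by noncomm_ring,
        h3, mul_one, hXdef]
    have e2 : u'' * (u' * l' * v') * v'' = l' * Y := by
      rw [show u'' * (u' * l' * v') * v'' = (u'' * u') * (l' * (v' * v'')) from by noncomm_ring,
        h2, one_mul, hYdef]
    rw [e1, h, e2]
  -- support of X*l
  have hZ1 : ∀ i j, ¬ (fA α i ≤ fA α j) → (X * l) i j = 0 := by
    intro i j hij
    rw [Matrix.mul_apply]
    apply Finset.sum_eq_zero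
    intro k _
    by_cases hki : k = i
    · subst hki
      rw [levi_FS α hl k j (by omega), mul_zero]
    · by_cases hs : fA α i < fA α k
      · by_cases he : fA α k = fA α j
        · exact absurd (by omega : fA α i ≤ fA α j) hij
        · rw [levi_FS α hl k j he, mul_zero]
      · rw [(hXG.2 i k (fun e => hki e.symm)).2 hs, zero_mul]
  have hZ2 : ∀ i j, ¬ (fA α j ≤ fA α i) → (l' * Y) i j = 0 := by
    intro i j hij
    rw [Matrix.mul_apply]
    apply Finset.sum_eq_zero
    intro k _
    by_cases hkj : k = j
    · subst hkj
      rw [levi_FS α hl' i k (by omega), zero_mul]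
    · by_cases hs : fA α j < fA α k
      · by_cases he : fA α i = fA α k
        · exact absurd (by omega : fA α j ≤ fA α i) hij
        · rw [levi_FS α hl' i k he, zero_mul]
      · rw [(hYG.2 k j hkj).2 hs, mul_zero]
  have hlunit : IsUnit l := hl.1.1
  have hlinv := isUnit_inv_mul hlunit
  have hFSX : FS (fA α) X := by
    have hXeq : X = (X * l) * l⁻¹ := by rw [mul_assoc, hlinv.1, mul_one]
    have hFSZ : FS (fA α) (X * l) := by
      intro i j hij
      rcases Nat.lt_or_ge (fA α i) (fA α j) with hlt | hge
      · rw [hkey]; exact hZ2 i j (by omega)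
      · exact hZ1 i j (by omega)
    rw [hXeq]
    exact hFSZ.mul (FS.inv hlunit (levi_FS α hl))
  have hX1 : X = 1 := by
    ext i j
    by_cases hij : i = j
    · subst hij; rw [hXG.1, Matrix.one_apply_eq]
    · rw [Matrix.one_apply_ne hij]
      by_cases hf : fA α i = fA α j
      · exact (hXG.2 i j hij).2 (by omega)
      · exact hFSX i j hf
  have hueq : u = u' := by
    have : u' * X = u := by rw [hXdef, ← mul_assoc, h1, one_mul]
    rw [hX1, mul_one] at this
    exact this.symm
  -- now the second stage
  obtain ⟨uu, _, hup1, hup2⟩ := inUpperSub_unit α β hu'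
  have e2 : l * v = l' * v' := by
    rw [hueq] at h
    calc l * v = (uu * u') * (l * v) := by rw [hup2, one_mul]
      _ = uu * (u' * l * v) := by noncomm_ring
      _ = uu * (u' * l' * v') := by rw [h]
      _ = (uu * u') * (l' * v') := by noncomm_ring
      _ = l' * v' := by rw [hup2, one_mul]
  have hlY : l = l' * Y := by
    calc l = (l * v) * v'' := by rw [mul_assoc, h3, mul_one]
      _ = (l' * v') * v'' := by rw [e2]
      _ = l' * Y := by rw [hYdef, mul_assoc]
  have hl'unit : IsUnit l' := hl'.1.1
  have hl'inv := isUnit_inv_mul hl'unit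
  have hFSY : FS (fA α) Y := by
    have hYeq : Y = l'⁻¹ * l := by
      rw [hlY, ← mul_assoc, hl'inv.2, one_mul]
    rw [hYeq]
    exact (FS.inv hl'unit (levi_FS α hl')).mul (levi_FS α hl)
  have hY1 : Y = 1 := by
    ext i j
    by_cases hij : i = j
    · subst hij; rw [hYG.1, Matrix.one_apply_eq]
    · rw [Matrix.one_apply_ne hij]
      by_cases hf : fA α i = fA α j
      · exact (hYG.2 i j hij).2 (by omega)
      · exact hFSY i j hf
  have hleq : l = l' := by rw [hlY, hY1, mul_one]
  have hveq : v = v' := by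
    have h5 : Y * v = v' := by rw [hYdef, mul_assoc, h4, mul_one]
    rw [hY1, one_mul] at h5
    exact h5
  exact ⟨hueq, hleq, hveq⟩

end Main


section Exist

variable {α β : Composition n}

def Wc (α : Composition n) (c : ℕ) (M : Matrix (Fin n) (Fin n) O) : Prop :=
  ∀ i j, fA α i ≠ fA α j → (fA α i < c ∨ fA α j < c) → M i j = 0

lemma sandwich (d e : Fin n → O) (M : Matrix (Fin n) (Fin n) O) (i j : Fin n) :
    (Matrix.diagonal d * M * Matrix.diagonal e) i j = d i * M i j * e j := by
  rw [Matrix.mul_diagonal, Matrix.diagonal_mul]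

lemma exists_step (c : ℕ)
    (IH : ∀ g : Matrix (Fin n) (Fin n) O, InBlockLevi β g → Wc α (c+1) g →
      ∃ u l v : Matrix (Fin n) (Fin n) O,
        InUpperSub α β u ∧ InBlockLevi α l ∧ InLowerSub α β v ∧ u * l * v = g)
    (g : Matrix (Fin n) (Fin n) O) (hg : InBlockLevi β g) (hW : Wc α c g) :
    ∃ u l v : Matrix (Fin n) (Fin n) O,
      InUpperSub α β u ∧ InBlockLevi α l ∧ InLowerSub α β v ∧ u * l * v = g := by
  classical
  set d1 : Fin n → O := fun i => if fA α i < c then 1 else 0 with hd1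
  set d2 : Fin n → O := fun i => if fA α i = c then 1 else 0 with hd2
  set d3 : Fin n → O := fun i => if c < fA α i then 1 else 0 with hd3
  set π₁ : Matrix (Fin n) (Fin n) O := Matrix.diagonal d1 with hπ1
  set π₂ : Matrix (Fin n) (Fin n) O := Matrix.diagonal d2 with hπ2
  set π₃ : Matrix (Fin n) (Fin n) O := Matrix.diagonal d3 with hπ3
  set D : Matrix (Fin n) (Fin n) O :=
    Matrix.of (fun i j => if c < fA α i ∧ c < fA α j then g i j
      else if i = j then 1 else 0) with hD
  have hDapp : ∀ i j, D i j = if c < fA α i ∧ c < fA α j then g i j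
      else if i = j then 1 else 0 := fun i j => rfl
  have hgunit := diag_isUnit hg.1
  have hDlow : ∀ i j : Fin n, j < i → D i j ∈ 𝔭 := by
    intro i j hij
    rw [hDapp]
    by_cases h : c < fA α i ∧ c < fA α j
    · rw [if_pos h]; exact hg.1.2 i j hij
    · rw [if_neg h, if_neg (Fin.ne_of_gt hij)]; exact zero_mem _
  have hDunit : IsUnit D := by
    apply isUnit_of_diag
    · intro i
      rw [hDapp]
      by_cases h : c < fA α i ∧ c < fA α i
      · rw [if_pos h]; exact hgunit i
      · rw [if_neg h, if_pos rfl]; exact isUnit_one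
    · exact hDlow
  set E : Matrix (Fin n) (Fin n) O := D⁻¹ with hE
  obtain ⟨hDE, hED⟩ := isUnit_inv_mul hDunit
  have hgF : FS (fA β) g := fun i j h => hg.2 i j (fun e => h ((fA_eq_iff β).mpr e))
  have hDF : FS (fA β) D := by
    intro i j h
    have hne : i ≠ j := fun e => h (by rw [e])
    rw [hDapp]
    by_cases hq : c < fA α i ∧ c < fA α j
    · rw [if_pos hq]; exact hgF i j h
    · rw [if_neg hq, if_neg hne]
  have hEF : FS (fA β) E := FS.inv hDunit hDF
  set F' : Fin n → ℕ := fun i => if c < fA α i then 0 else (i : ℕ) + 1 with hF'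
  have hDF' : FS F' D := by
    intro i j h
    rw [hDapp]
    by_cases hq : c < fA α i ∧ c < fA α j
    · exfalso; apply h; simp only [hF']; rw [if_pos hq.1, if_pos hq.2]
    · rw [if_neg hq, if_neg (fun e : i = j => h (by rw [e]))]
  have hEF' : FS F' E := FS.inv hDunit hDF'
  have hEsupp : ∀ i j, ¬ ((c < fA α i ∧ c < fA α j) ∨ i = j) → E i j = 0 := by
    intro i j h
    refine hEF' i j (fun e => h ?_)
    simp only [hF'] at e
    by_cases hi : c < fA α i
    · by_cases hj : c < fA α j
      · exact Or.inl ⟨hi, hj⟩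
      · rw [if_pos hi, if_neg hj] at e
        exact (by omega : False).elim
    · by_cases hj : c < fA α j
      · rw [if_neg hi, if_pos hj] at e
        exact (by omega : False).elim
      · rw [if_neg hi, if_neg hj] at e
        exact Or.inr (Fin.ext (by omega))
  have hErow : ∀ i j, ¬ c < fA α i → E i j = (1 : Matrix (Fin n) (Fin n) O) i j := by
    intro i j hi
    have h : (D * E) i j = (1 : Matrix (Fin n) (Fin n) O) i j := by rw [hDE]
    rw [Matrix.mul_apply] at h
    rw [Finset.sum_eq_single i (fun k _ hk => by
        rw [hDapp, if_neg (fun hc => hi hc.1), if_neg (fun e => hk e.symm), zero_mul])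
      (fun hmem => absurd (Finset.mem_univ i) hmem)] at h
    rw [hDapp, if_neg (fun hc => hi hc.1), if_pos rfl, one_mul] at h
    exact h
  have hEcol : ∀ i j, ¬ c < fA α j → E i j = (1 : Matrix (Fin n) (Fin n) O) i j := by
    intro i j hj
    have h : (E * D) i j = (1 : Matrix (Fin n) (Fin n) O) i j := by rw [hED]
    rw [Matrix.mul_apply] at h
    rw [Finset.sum_eq_single j (fun k _ hk => by
        rw [hDapp, if_neg (fun hc => hj hc.2), if_neg hk, mul_zero])
      (fun hmem => absurd (Finset.mem_univ j) hmem)] at h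
    rw [hDapp, if_neg (fun hc => hj hc.2), if_pos rfl, mul_one] at h
    exact h
  -- diagonal projector identities
  have hdd : ∀ p q : Fin n → O,
      Matrix.diagonal p * Matrix.diagonal q = Matrix.diagonal (fun i => p i * q i) := by
    intro p q; rw [Matrix.diagonal_mul_diagonal]
  have hπ22 : π₂ * π₂ = π₂ := by
    have he : (fun i => d2 i * d2 i) = d2 := by
      funext i
      by_cases h : fA α i = c <;> simp [hd2, h]
    rw [hπ2, hdd, he]
  have hπ23 : π₂ * π₃ = 0 := by
    rw [hπ2, hπ3, hdd]
    have he : (fun i => d2 i * d3 i) = fun _ : Fin n => (0 : O) := by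
      funext i
      simp only [hd2, hd3]
      by_cases h : fA α i = c
      · rw [if_pos h, if_neg (by omega), mul_zero]
      · rw [if_neg h, zero_mul]
    rw [he, Matrix.diagonal_zero]
  have hπ32 : π₃ * π₂ = 0 := by
    rw [hπ2, hπ3, hdd]
    have he : (fun i => d3 i * d2 i) = fun _ : Fin n => (0 : O) := by
      funext i
      simp only [hd2, hd3]
      by_cases h : c < fA α i
      · rw [if_pos h, if_neg (by omega), mul_zero]
      · rw [if_neg h, zero_mul]
    rw [he, Matrix.diagonal_zero]
  have hπ12 : π₁ * π₂ = 0 := by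
    rw [hπ1, hπ2, hdd]
    have he : (fun i => d1 i * d2 i) = fun _ : Fin n => (0 : O) := by
      funext i
      simp only [hd1, hd2]
      by_cases h : fA α i < c
      · rw [if_pos h, if_neg (by omega), mul_zero]
      · rw [if_neg h, zero_mul]
    rw [he, Matrix.diagonal_zero]
  have hπ21 : π₂ * π₁ = 0 := by
    rw [hπ1, hπ2, hdd]
    have he : (fun i => d2 i * d1 i) = fun _ : Fin n => (0 : O) := by
      funext i
      simp only [hd1, hd2]
      by_cases h : fA α i = c
      · rw [if_pos h, if_neg (by omega), mul_zero]
      · rw [if_neg h, zero_mul]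
    rw [he, Matrix.diagonal_zero]
  -- E interacts with π₃
  have hπE : π₃ * E = E - (1 - π₃) := by
    ext i j
    rw [hπ3, Matrix.diagonal_mul, Matrix.sub_apply, Matrix.sub_apply]
    by_cases hi : c < fA α i
    · rw [show d3 i = 1 from by simp [hd3, hi], one_mul]
      by_cases h : i = j
      · subst h
        rw [Matrix.one_apply_eq, Matrix.diagonal_apply_eq,
          show d3 i = 1 from by simp [hd3, hi]]
        ring
      · rw [Matrix.one_apply_ne h, Matrix.diagonal_apply_ne _ h]
        ring
    · rw [show d3 i = 0 from by simp [hd3, hi], zero_mul, hErow i j hi]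
      by_cases h : i = j
      · subst h
        rw [Matrix.one_apply_eq, Matrix.diagonal_apply_eq,
          show d3 i = 0 from by simp [hd3, hi]]
        ring
      · rw [Matrix.one_apply_ne h, Matrix.diagonal_apply_ne _ h]
        ring
  have hEπ : E * π₃ = E - (1 - π₃) := by
    ext i j
    rw [hπ3, Matrix.mul_diagonal, Matrix.sub_apply, Matrix.sub_apply]
    by_cases hj : c < fA α j
    · rw [show d3 j = 1 from by simp [hd3, hj], mul_one]
      by_cases h : i = j
      · subst h
        rw [Matrix.one_apply_eq, Matrix.diagonal_apply_eq,
          show d3 i = 1 from by simp [hd3, hj]]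
        ring
      · rw [Matrix.one_apply_ne h, Matrix.diagonal_apply_ne _ h]
        ring
    · rw [show d3 j = 0 from by simp [hd3, hj], mul_zero, hEcol i j hj]
      by_cases h : i = j
      · subst h
        rw [Matrix.one_apply_eq, Matrix.diagonal_apply_eq,
          show d3 i = 0 from by simp [hd3, hj]]
        ring
      · rw [Matrix.one_apply_ne h, Matrix.diagonal_apply_ne _ h]
        ring
  have h1E : (1 - π₃) * E = 1 - π₃ := by rw [sub_mul, one_mul, hπE]; abel
  have hE1 : E * (1 - π₃) = 1 - π₃ := by rw [mul_sub, mul_one, hEπ]; abel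
  have hgD : π₃ * g * π₃ = D - (1 - π₃) := by
    ext i j
    rw [hπ3, sandwich, Matrix.sub_apply, Matrix.sub_apply, hDapp]
    by_cases hq : c < fA α i ∧ c < fA α j
    · rw [if_pos hq, show d3 i = 1 from by simp [hd3, hq.1],
        show d3 j = 1 from by simp [hd3, hq.2]]
      by_cases h : i = j
      · subst h
        rw [Matrix.one_apply_eq, Matrix.diagonal_apply_eq,
          show d3 i = 1 from by simp [hd3, hq.1]]
        ring
      · rw [Matrix.one_apply_ne h, Matrix.diagonal_apply_ne _ h]
        ring
    · rw [if_neg hq]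
      by_cases h : i = j
      · subst h
        have h3 : ¬ c < fA α i := fun hc => hq ⟨hc, hc⟩
        rw [if_pos rfl, Matrix.one_apply_eq, Matrix.diagonal_apply_eq,
          show d3 i = 0 from by simp [hd3, h3]]
        ring
      · rw [if_neg h, Matrix.one_apply_ne h, Matrix.diagonal_apply_ne _ h]
        by_cases hi : c < fA α i
        · have hj : ¬ c < fA α j := fun hc => hq ⟨hi, hc⟩
          rw [show d3 j = 0 from by simp [hd3, hj]]
          ring
        · rw [show d3 i = 0 from by simp [hd3, hi]]
          ring
  -- the region-crossing blocks of g vanish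
  have hg12 : π₁ * g * π₂ = 0 := by
    ext i j
    rw [hπ1, hπ2, sandwich, Matrix.zero_apply]
    by_cases h1 : fA α i < c
    · by_cases h2 : fA α j = c
      · rw [hW i j (by omega) (Or.inl h1)]; ring
      · rw [show d2 j = 0 from by simp [hd2, h2]]; ring
    · rw [show d1 i = 0 from by simp [hd1, h1]]; ring
  have hg21 : π₂ * g * π₁ = 0 := by
    ext i j
    rw [hπ1, hπ2, sandwich, Matrix.zero_apply]
    by_cases h1 : fA α i = c
    · by_cases h2 : fA α j < c
      · rw [hW i j (by omega) (Or.inr h2)]; ring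
      · rw [show d1 j = 0 from by simp [hd1, h2]]; ring
    · rw [show d2 i = 0 from by simp [hd2, h1]]; ring
  have hg13 : π₁ * g * π₃ = 0 := by
    ext i j
    rw [hπ1, hπ3, sandwich, Matrix.zero_apply]
    by_cases h1 : fA α i < c
    · by_cases h2 : c < fA α j
      · rw [hW i j (by omega) (Or.inl h1)]; ring
      · rw [show d3 j = 0 from by simp [hd3, h2]]; ring
    · rw [show d1 i = 0 from by simp [hd1, h1]]; ring
  have hg31 : π₃ * g * π₁ = 0 := by
    ext i j
    rw [hπ1, hπ3, sandwich, Matrix.zero_apply]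
    by_cases h1 : c < fA α i
    · by_cases h2 : fA α j < c
      · rw [hW i j (by omega) (Or.inr h2)]; ring
      · rw [show d1 j = 0 from by simp [hd1, h2]]; ring
    · rw [show d3 i = 0 from by simp [hd3, h1]]; ring
  -- the correction matrices
  set X : Matrix (Fin n) (Fin n) O := π₂ * g * E * π₃ with hXdef
  set Y : Matrix (Fin n) (Fin n) O := π₃ * E * g * π₂ with hYdef
  have hXapp : ∀ i j, X i j = d2 i * (g * E) i j * d3 j := by
    intro i j
    rw [hXdef, show π₂ * g * E * π₃ = π₂ * (g * E) * π₃ from by rw [mul_assoc π₂ g E],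
      hπ2, hπ3, sandwich]
  have hYapp : ∀ i j, Y i j = d3 i * (E * g) i j * d2 j := by
    intro i j
    rw [hYdef, show π₃ * E * g * π₂ = π₃ * (E * g) * π₂ from by rw [mul_assoc π₃ E g],
      hπ3, hπ2, sandwich]
  have hXzero : ∀ i j, ¬ (fA α i = c ∧ c < fA α j) → X i j = 0 := by
    intro i j h
    rw [hXapp]
    by_cases h1 : fA α i = c
    · have hcj : ¬ c < fA α j := fun hc => h ⟨h1, hc⟩
      rw [show d3 j = 0 from by simp [hd3, hcj], mul_zero]
    · rw [show d2 i = 0 from by simp [hd2, h1], zero_mul, zero_mul]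
  have hYzero : ∀ i j, ¬ (c < fA α i ∧ fA α j = c) → Y i j = 0 := by
    intro i j h
    rw [hYapp]
    by_cases h1 : c < fA α i
    · have hcj : ¬ fA α j = c := fun hc => h ⟨h1, hc⟩
      rw [show d2 j = 0 from by simp [hd2, hcj], mul_zero]
    · rw [show d3 i = 0 from by simp [hd3, h1], zero_mul, zero_mul]
  have hYp : ∀ i j, Y i j ∈ 𝔭 := by
    intro i j
    rw [hYapp]
    by_cases h2 : fA α j = c
    · by_cases h3 : c < fA α i
      · have hmain : (E * g) i j ∈ 𝔭 := by
          rw [Matrix.mul_apply]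
          apply Ideal.sum_mem
          intro k _
          by_cases hEk : E i k = 0
          · rw [hEk, zero_mul]; exact zero_mem _
          · have hk : c < fA α k := by
              by_contra hc
              exact hEk (hEsupp i k (fun hor =>
                hor.elim (fun hh => hc hh.2) (fun he => hc (he ▸ h3))))
            have hjk : j < k := lt_of_fA_lt α (by omega)
            exact Ideal.mul_mem_left _ _ (hg.1.2 k j hjk)
        exact Ideal.mul_mem_right _ _ (Ideal.mul_mem_left _ _ hmain)
      · rw [show d3 i = 0 from by simp [hd3, h3], zero_mul, zero_mul]
        exact zero_mem _
    · rw [show d2 j = 0 from by simp [hd2, h2], mul_zero]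
      exact zero_mem _
  have hXF : FS (fA β) X := by
    rw [hXdef, hπ2, hπ3]
    exact (((FS.diagonal d2).mul hgF).mul hEF).mul (FS.diagonal d3)
  have hYF : FS (fA β) Y := by
    rw [hYdef, hπ3, hπ2]
    exact (((FS.diagonal d3).mul hEF).mul hgF).mul (FS.diagonal d2)
  have hXXz : X * X = 0 := by
    ext i j
    rw [Matrix.mul_apply, Matrix.zero_apply]
    apply Finset.sum_eq_zero
    intro k _
    by_cases h : fA α i = c ∧ c < fA α k
    · rw [hXzero k j (fun hh => absurd hh.1 (by omega)), mul_zero]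
    · rw [hXzero i k h, zero_mul]
  have hYYz : Y * Y = 0 := by
    ext i j
    rw [Matrix.mul_apply, Matrix.zero_apply]
    apply Finset.sum_eq_zero
    intro k _
    by_cases h : c < fA α i ∧ fA α k = c
    · rw [hYzero k j (fun hh => absurd hh.1 (by omega)), mul_zero]
    · rw [hYzero i k h, zero_mul]
  have hXm : (1 - X) * (1 + X) = 1 := by
    rw [show (1 - X) * (1 + X) = 1 - X * X from by noncomm_ring, hXXz, sub_zero]
  have hXm' : (1 + X) * (1 - X) = 1 := by
    rw [show (1 + X) * (1 - X) = 1 - X * X from by noncomm_ring, hXXz, sub_zero]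
  have hYm : (1 - Y) * (1 + Y) = 1 := by
    rw [show (1 - Y) * (1 + Y) = 1 - Y * Y from by noncomm_ring, hYYz, sub_zero]
  have hYm' : (1 + Y) * (1 - Y) = 1 := by
    rw [show (1 + Y) * (1 - Y) = 1 - Y * Y from by noncomm_ring, hYYz, sub_zero]
  -- the conjugated matrix
  set G' : Matrix (Fin n) (Fin n) O := (1 - X) * g * (1 - Y) with hG'def
  have hexp : G' = g - X * g - g * Y + X * (g * Y) := by
    rw [hG'def]; noncomm_ring
  -- k-lemmas
  have k1 : π₂ * X = X := by
    rw [hXdef, show π₂ * (π₂ * g * E * π₃) = (π₂ * π₂) * g * E * π₃ from by noncomm_ring,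
      hπ22]
  have k2 : Y * π₃ = 0 := by
    rw [hYdef, show (π₃ * E * g * π₂) * π₃ = π₃ * E * g * (π₂ * π₃) from by noncomm_ring,
      hπ23, mul_zero]
  have k3 : X * g * π₃ = π₂ * g * π₃ := by
    rw [hXdef]
    calc π₂ * g * E * π₃ * g * π₃
        = π₂ * g * (E * (π₃ * g * π₃)) := by noncomm_ring
      _ = π₂ * g * (E * (D - (1 - π₃))) := by rw [hgD]
      _ = π₂ * g * (E * D - E * (1 - π₃)) := by rw [mul_sub]
      _ = π₂ * g * (1 - (1 - π₃)) := by rw [hED, hE1]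
      _ = π₂ * g * π₃ := by rw [sub_sub_cancel]
  have k4 : π₃ * X = 0 := by
    rw [hXdef, show π₃ * (π₂ * g * E * π₃) = (π₃ * π₂) * (g * E * π₃) from by noncomm_ring,
      hπ32, zero_mul]
  have k5 : Y * π₂ = Y := by
    rw [hYdef, show (π₃ * E * g * π₂) * π₂ = π₃ * E * g * (π₂ * π₂) from by noncomm_ring,
      hπ22]
  have k6 : π₃ * g * Y = π₃ * g * π₂ := by
    rw [hYdef]
    calc π₃ * g * (π₃ * E * g * π₂)
        = (π₃ * g * π₃) * (E * (g * π₂)) := by noncomm_ring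
      _ = (D - (1 - π₃)) * (E * (g * π₂)) := by rw [hgD]
      _ = (D * E) * (g * π₂) - ((1 - π₃) * E) * (g * π₂) := by noncomm_ring
      _ = 1 * (g * π₂) - (1 - π₃) * (g * π₂) := by rw [hDE, h1E]
      _ = π₃ * (g * π₂) := by noncomm_ring
      _ = π₃ * g * π₂ := by rw [mul_assoc]
  have k7 : π₁ * X = 0 := by
    rw [hXdef, show π₁ * (π₂ * g * E * π₃) = (π₁ * π₂) * (g * E * π₃) from by noncomm_ring,
      hπ12, zero_mul]
  have k8 : Y * π₁ = 0 := by
    rw [hYdef, show (π₃ * E * g * π₂) * π₁ = π₃ * E * g * (π₂ * π₁) from by noncomm_ring,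
      hπ21, mul_zero]
  have k9 : π₁ * g * Y = 0 := by
    rw [hYdef, show π₁ * g * (π₃ * E * g * π₂) = (π₁ * g * π₃) * (E * (g * π₂)) from by
      noncomm_ring, hg13, zero_mul]
  have k10 : X * g * π₁ = 0 := by
    rw [hXdef, show π₂ * g * E * π₃ * g * π₁ = (π₂ * g * E) * (π₃ * g * π₁) from by
      noncomm_ring, hg31, mul_zero]
  -- the six block identities for G'
  have I23 : π₂ * G' * π₃ = 0 := by
    calc π₂ * G' * π₃
        = π₂ * g * π₃ - π₂ * X * g * π₃ - π₂ * g * (Y * π₃) + π₂ * X * g * (Y * π₃) := by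
          rw [hexp]; noncomm_ring
      _ = 0 := by
          simp only [k1, k2, mul_zero, sub_zero, add_zero]
          rw [k3, sub_self]
  have I32 : π₃ * G' * π₂ = 0 := by
    calc π₃ * G' * π₂
        = π₃ * g * π₂ - π₃ * X * (g * π₂) - π₃ * g * (Y * π₂) + π₃ * X * (g * (Y * π₂)) := by
          rw [hexp]; noncomm_ring
      _ = 0 := by
          simp only [k4, k5, zero_mul, sub_zero, add_zero]
          rw [k6, sub_self]
  have I11 : π₁ * G' * π₁ = π₁ * g * π₁ := by
    calc π₁ * G' * π₁
        = π₁ * g * π₁ - π₁ * X * (g * π₁) - π₁ * g * (Y * π₁) + π₁ * X * (g * (Y * π₁)) := by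
          rw [hexp]; noncomm_ring
      _ = π₁ * g * π₁ := by
          simp only [k7, k8, zero_mul, mul_zero, sub_zero, add_zero]
  have I12 : π₁ * G' * π₂ = 0 := by
    calc π₁ * G' * π₂
        = π₁ * g * π₂ - π₁ * X * (g * π₂) - π₁ * g * Y * π₂ + π₁ * X * (g * Y * π₂) := by
          rw [hexp]; noncomm_ring
      _ = 0 := by
          simp only [k7, k9, hg12, zero_mul, mul_zero, sub_zero, add_zero, zero_sub,
            neg_zero, zero_add, sub_self]
  have I13 : π₁ * G' * π₃ = 0 := by
    calc π₁ * G' * π₃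
        = π₁ * g * π₃ - π₁ * X * (g * π₃) - π₁ * g * (Y * π₃) + π₁ * X * (g * (Y * π₃)) := by
          rw [hexp]; noncomm_ring
      _ = 0 := by
          simp only [k7, k2, hg13, zero_mul, mul_zero, sub_zero, add_zero, zero_sub,
            neg_zero, zero_add, sub_self]
  have I21 : π₂ * G' * π₁ = 0 := by
    calc π₂ * G' * π₁
        = π₂ * g * π₁ - π₂ * X * g * π₁ - π₂ * g * (Y * π₁) + π₂ * X * g * (Y * π₁) := by
          rw [hexp]; noncomm_ring
      _ = 0 := by
          simp only [k1, k8, hg21, k10, zero_mul, mul_zero, sub_zero, add_zero, zero_sub,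
            neg_zero, zero_add, sub_self]
  have I31 : π₃ * G' * π₁ = 0 := by
    calc π₃ * G' * π₁
        = π₃ * g * π₁ - π₃ * X * (g * π₁) - π₃ * g * (Y * π₁) + π₃ * X * (g * (Y * π₁)) := by
          rw [hexp]; noncomm_ring
      _ = 0 := by
          simp only [k4, k8, hg31, zero_mul, mul_zero, sub_zero, add_zero, zero_sub,
            neg_zero, zero_add, sub_self]
  -- entry extraction
  have hext : ∀ (da db : Fin n → O) (M : Matrix (Fin n) (Fin n) O) (i j : Fin n),
      da i = 1 → db j = 1 → (Matrix.diagonal da * M * Matrix.diagonal db) i j = M i j := by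
    intro da db M i j h1 h2
    rw [sandwich, h1, h2, one_mul, mul_one]
  have hWnew : Wc α (c+1) G' := by
    intro i j hij hlt
    rcases Nat.lt_trichotomy (fA α i) c with h1 | h1 | h1 <;>
      rcases Nat.lt_trichotomy (fA α j) c with h2 | h2 | h2
    · -- (1,1)
      have e : (π₁ * G' * π₁) i j = G' i j := by
        rw [hπ1]; exact hext d1 d1 G' i j (by simp [hd1, h1]) (by simp [hd1, h2])
      have e2 : (π₁ * g * π₁) i j = g i j := by
        rw [hπ1]; exact hext d1 d1 g i j (by simp [hd1, h1]) (by simp [hd1, h2])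
      rw [← e, I11, e2]
      exact hW i j hij (Or.inl h1)
    · -- (1,2)
      have e : (π₁ * G' * π₂) i j = G' i j := by
        rw [hπ1, hπ2]; exact hext d1 d2 G' i j (by simp [hd1, h1]) (by simp [hd2, h2])
      rw [← e, I12, Matrix.zero_apply]
    · -- (1,3)
      have e : (π₁ * G' * π₃) i j = G' i j := by
        rw [hπ1, hπ3]; exact hext d1 d3 G' i j (by simp [hd1, h1]) (by simp [hd3, h2])
      rw [← e, I13, Matrix.zero_apply]
    · -- (2,1)
      have e : (π₂ * G' * π₁) i j = G' i j := by
        rw [hπ2, hπ1]; exact hext d2 d1 G' i j (by simp [hd2, h1]) (by simp [hd1, h2])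
      rw [← e, I21, Matrix.zero_apply]
    · -- (2,2) : impossible
      exact absurd (h1.trans h2.symm) hij
    · -- (2,3)
      have e : (π₂ * G' * π₃) i j = G' i j := by
        rw [hπ2, hπ3]; exact hext d2 d3 G' i j (by simp [hd2, h1]) (by simp [hd3, h2])
      rw [← e, I23, Matrix.zero_apply]
    · -- (3,1)
      have e : (π₃ * G' * π₁) i j = G' i j := by
        rw [hπ3, hπ1]; exact hext d3 d1 G' i j (by simp [hd3, h1]) (by simp [hd1, h2])
      rw [← e, I31, Matrix.zero_apply]
    · -- (3,2)
      have e : (π₃ * G' * π₂) i j = G' i j := by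
        rw [hπ3, hπ2]; exact hext d3 d2 G' i j (by simp [hd3, h1]) (by simp [hd2, h2])
      rw [← e, I32, Matrix.zero_apply]
    · -- (3,3) : contradicts hlt
      exact (by omega : False).elim
  -- G' lies in the β-Levi
  have hG'unit : IsUnit G' := by
    have hu1 : IsUnit (1 - X) := ⟨⟨1 - X, 1 + X, hXm, hXm'⟩, rfl⟩
    have hu2 : IsUnit (1 - Y) := ⟨⟨1 - Y, 1 + Y, hYm, hYm'⟩, rfl⟩
    rw [hG'def]
    exact (hu1.mul hg.1.1).mul hu2
  have hG'low : ∀ i j : Fin n, j < i → G' i j ∈ 𝔭 := by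
    have hxφ : ((1 - X).map φ).BlockTriangular id := by
      intro i j hij
      have hij' : j < i := hij
      have hz : X i j = 0 := hXzero i j (fun hh =>
        absurd (lt_of_fA_lt α (show fA α i < fA α j from by omega))
          (not_lt.mpr (le_of_lt hij')))
      rw [Matrix.map_apply, Matrix.sub_apply, Matrix.one_apply_ne hij'.ne', hz,
        sub_zero, map_zero]
    have hgφ : (g.map φ).BlockTriangular id := fun i j hij => by
      rw [Matrix.map_apply, mem_p_iff.mp (hg.1.2 i j hij)]
    have hyφ : (1 - Y).map φ = 1 := by
      ext i j
      rw [Matrix.map_apply, Matrix.sub_apply, map_sub, mem_p_iff.mp (hYp i j), sub_zero]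
      by_cases h : i = j
      · subst h; rw [Matrix.one_apply_eq, _root_.map_one, Matrix.one_apply_eq]
      · rw [Matrix.one_apply_ne h, map_zero, Matrix.one_apply_ne h]
    have hmapG : G'.map φ = ((1 - X).map φ) * (g.map φ) := by
      rw [hG'def, Matrix.map_mul, Matrix.map_mul, hyφ, mul_one]
    have hBT : (G'.map φ).BlockTriangular id := by
      rw [hmapG]; exact hxφ.mul hgφ
    intro i j hij
    rw [mem_p_iff]
    have h := hBT (show (id j : Fin n) < id i from hij)
    rwa [Matrix.map_apply] at h
  have hG'F : FS (fA β) G' := by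
    rw [hG'def]
    exact ((FS.one.sub hXF).mul hgF).mul (FS.one.sub hYF)
  have hG'Levi : InBlockLevi β G' :=
    ⟨⟨hG'unit, hG'low⟩, fun i j hij => hG'F i j (fun e => hij ((fA_eq_iff β).mp e))⟩
  obtain ⟨u, l, v, hu, hl, hv, heq⟩ := IH G' hG'Levi hWnew
  -- 1 + X and 1 + Y are in the unipotent groups
  have hu0 : InUpperSub α β (1 + X) := by
    refine (inUpperSub_iff α β).mpr ⟨⟨?_, ?_⟩, FS.one.add hXF⟩
    · intro i
      rw [Matrix.add_apply, Matrix.one_apply_eq, hXzero i i (fun hh => by omega), add_zero]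
    · intro i j hij
      refine ⟨trivial, fun hs => ?_⟩
      rw [Matrix.add_apply, Matrix.one_apply_ne hij, hXzero i j (fun hh => hs (by omega)),
        add_zero]
  have hv0 : InLowerSub α β (1 + Y) := by
    refine (inLowerSub_iff α β).mpr ⟨⟨?_, ?_⟩, FS.one.add hYF⟩
    · intro i
      rw [Matrix.add_apply, Matrix.one_apply_eq, hYzero i i (fun hh => by omega), add_zero]
    · intro i j hij
      refine ⟨?_, fun hs => ?_⟩
      · rw [Matrix.add_apply, Matrix.one_apply_ne hij, zero_add]
        exact hYp i j
      · rw [Matrix.add_apply, Matrix.one_apply_ne hij, hYzero i j (fun hh => hs (by omega)),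
          add_zero]
  refine ⟨(1 + X) * u, l, v * (1 + Y), inUpperSub_mul α β hu0 hu, hl,
    inLowerSub_mul α β hv hv0, ?_⟩
  calc (1 + X) * u * l * (v * (1 + Y))
      = (1 + X) * (u * l * v) * (1 + Y) := by simp only [mul_assoc]
    _ = (1 + X) * G' * (1 + Y) := by rw [heq]
    _ = ((1 + X) * (1 - X)) * g * ((1 - Y) * (1 + Y)) := by
        rw [hG'def]; simp only [mul_assoc]
    _ = g := by rw [hXm', hYm, one_mul, mul_one]

lemma exists_decomp (hαβ : ∀ i j : Fin n, α.index i = α.index j → β.index i = β.index j) :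
    ∀ (m c : ℕ), α.length ≤ c + m → ∀ g : Matrix (Fin n) (Fin n) O, InBlockLevi β g →
      Wc α c g →
      ∃ u l v : Matrix (Fin n) (Fin n) O,
        InUpperSub α β u ∧ InBlockLevi α l ∧ InLowerSub α β v ∧ u * l * v = g := by
  intro m
  induction m with
  | zero =>
    intro c hc g hg hW
    refine ⟨1, g, 1, (inUpperSub_iff α β).mpr ⟨GenU.one, FS.one⟩, ⟨hg.1, ?_⟩,
      (inLowerSub_iff α β).mpr ⟨GenU.one, FS.one⟩, by rw [one_mul, mul_one]⟩
    intro i j hij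
    refine hW i j (fun e => hij ((fA_eq_iff α).mp e)) (Or.inl ?_)
    have := fA_lt_len α i
    omega
  | succ m ih =>
    intro c hc g hg hW
    exact exists_step c (fun g' h1 h2 => ih (c+1) (by omega) g' h1 h2) g hg hW

end Exist

end IwahoriPf

/-- **Lemma (Iwahori decomposition of `I_β`).** Let `O` be a discrete valuation ring
and `α ≤ β` compositions of `n` (i.e. `α` refines `β`).  Then the multiplication map
`U_α^β × I_α × V_α^β → I_β` is a bijection: products `u·l·v` lie in `I_β`, and every
`g ∈ I_β` factors uniquely as `g = u·l·v` with `u ∈ U_α^β`, `l ∈ I_α`, `v ∈ V_α^β`. -/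
theorem iwahori_decomposition_blocks
    (O : Type) [CommRing O] [IsDomain O] [IsDiscreteValuationRing O] (n : ℕ)
    (α β : Composition n)
    (hαβ : ∀ i j : Fin n, α.index i = α.index j → β.index i = β.index j) :
    (∀ u l v : Matrix (Fin n) (Fin n) O,
      InUpperSub α β u → InBlockLevi α l → InLowerSub α β v →
        InBlockLevi β (u * l * v)) ∧
    (∀ g : Matrix (Fin n) (Fin n) O, InBlockLevi β g →
      ∃! t : Matrix (Fin n) (Fin n) O × Matrix (Fin n) (Fin n) O ×
          Matrix (Fin n) (Fin n) O,
        InUpperSub α β t.1 ∧ InBlockLevi α t.2.1 ∧ InLowerSub α β t.2.2 ∧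
          t.1 * t.2.1 * t.2.2 = g) := by
  constructor
  · intro u l v hu hl hv
    exact IwahoriPf.prod_levi hαβ hu hl hv
  · intro g hg
    obtain ⟨u, l, v, hu, hl, hv, heq⟩ :=
      IwahoriPf.exists_decomp hαβ α.length 0 (by omega) g hg
        (fun i j _ h => absurd h (by omega))
    refine ⟨(u, l, v), ⟨hu, hl, hv, heq⟩, ?_⟩
    rintro ⟨u', l', v'⟩ ⟨hu', hl', hv', heq'⟩
    obtain ⟨e1, e2, e3⟩ := IwahoriPf.decomp_unique hu' hl' hv' hu hl hv heq' heq
    exact Prod.ext e1 (Prod.ext e2 e3)
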